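/- For real constants A, B with A ≠ 0 and B ≠ 0, the radius of convergence of the power series u(w) = Σ_{n≥0} c_n A^{n+1} B^n w^{2n+1} equals 1/(2√(|A·B|)), where c_n is the n-th Catalan number. -/

import Mathlib

open Filter FormalMultilinearSeries

lemma centralBinom_le_four_pow (n : ℕ) : n.centralBinom ≤ 4 ^ n := by
  have h1 : (2 * n).choose n ≤ ∑ m ∈ Finset.range (2 * n + 1), (2 * n).choose m :=
    Finset.single_le_sum (fun i _ => Nat.zero_le _) (by simp; omega)
  have h2 := Nat.sum_range_choose (2 * n)
  rw [Nat.centralBinom]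
  calc (2 * n).choose n ≤ 2 ^ (2 * n) := by omega
    _ = 4 ^ n := by rw [pow_mul]; norm_num

lemma catalan_le_four_pow (n : ℕ) : catalan n ≤ 4 ^ n :=
  calc catalan n ≤ (n + 1) * catalan n := Nat.le_mul_of_pos_left _ (by omega)
    _ = n.centralBinom := succ_mul_catalan_eq_centralBinom n
    _ ≤ 4 ^ n := centralBinom_le_four_pow n

lemma four_pow_le_catalan_mul (n : ℕ) (hn : 0 < n) :
    4 ^ n ≤ 2 * n * (n + 1) * catalan n := by
  have h1 := Nat.four_pow_le_two_mul_self_mul_centralBinom n hn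
  have h2 := succ_mul_catalan_eq_centralBinom n
  calc 4 ^ n ≤ 2 * n * n.centralBinom := h1
    _ = 2 * n * ((n + 1) * catalan n) := by rw [h2]
    _ = 2 * n * (n + 1) * catalan n := by ring

theorem radius_of_convergence_catalan_series
    (A B : ℝ) (hA : A ≠ 0) (hB : B ≠ 0)
    (a : ℕ → ℝ)
    (hodd : ∀ n : ℕ, a (2 * n + 1) = (catalan n : ℝ) * A ^ (n + 1) * B ^ n)
    (heven : ∀ n : ℕ, a (2 * n) = 0) :
    (FormalMultilinearSeries.ofScalars ℝ a).radius
      = ENNReal.ofReal (1 / (2 * Real.sqrt |A * B|)) := by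
  set s := Real.sqrt |A * B| with hs_def
  have hab : 0 < |A * B| := abs_pos.mpr (mul_ne_zero hA hB)
  have hs : 0 < s := Real.sqrt_pos.mpr hab
  have hs2 : s ^ 2 = |A * B| := Real.sq_sqrt hab.le
  have hAB : |A| * |B| = s ^ 2 := by rw [hs2, abs_mul]
  set R : ℝ := 1 / (2 * s) with hR_def
  have hR : 0 < R := by positivity
  have hR2 : |A| * |B| * R ^ 2 = 1 / 4 := by
    rw [hAB, hR_def]; field_simp; ring
  have hnorm : ∀ n, ‖ofScalars ℝ a n‖ = |a n| := fun n => by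
    rw [FormalMultilinearSeries.ofScalars_norm, Real.norm_eq_abs]
  have habs : ∀ k : ℕ, |a (2 * k + 1)| = (catalan k : ℝ) * |A| ^ (k + 1) * |B| ^ k := by
    intro k
    rw [hodd k, abs_mul, abs_mul, abs_pow, abs_pow, Nat.abs_cast]
  refine le_antisymm ?_ ?_
  · -- radius ≤ ofReal R
    by_contra h
    push_neg at h
    obtain ⟨r, hr1, hr2⟩ := ENNReal.lt_iff_exists_nnreal_btwn.mp h
    have hrR : R < (r : ℝ) := by
      rw [← ENNReal.ofReal_coe_nnreal] at hr1
      exact (ENNReal.ofReal_lt_ofReal_iff_of_nonneg hR.le).mp hr1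
    have hrpos : 0 < (r : ℝ) := hR.trans hrR
    obtain ⟨C, hC, hbound⟩ := (ofScalars ℝ a).norm_mul_pow_le_of_lt_radius hr2
    set q : ℝ := 4 * (|A| * |B|) * (r : ℝ) ^ 2 with hq_def
    have hq : 1 < q := by
      have h1 : 1 < (r : ℝ) * (2 * s) := (div_lt_iff₀ (by positivity)).mp hrR
      have : q = ((r : ℝ) * (2 * s)) ^ 2 := by rw [hq_def, hAB]; ring
      rw [this]
      nlinarith
    have hqpos : 0 < q := lt_trans one_pos hq
    set D : ℝ := C / (|A| * (r : ℝ)) with hD_def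
    have hApos : 0 < |A| := abs_pos.mpr hA
    have hD : 0 < D := by positivity
    have key : ∀ k : ℕ, 1 ≤ k → q ^ k ≤ 4 * D * (k : ℝ) ^ 2 := by
      intro k hk
      have hb := hbound (2 * k + 1)
      rw [hnorm, habs k] at hb
      have hterm : (catalan k : ℝ) * |A| ^ (k + 1) * |B| ^ k * (r : ℝ) ^ (2 * k + 1)
          = |A| * (r : ℝ) * ((catalan k : ℝ) * (q / 4) ^ k) := by
        have h4 : q / 4 = |A| * |B| * (r : ℝ) ^ 2 := by rw [hq_def]; ring
        rw [h4, pow_succ, pow_add, pow_mul, mul_pow]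
        ring
      rw [hterm] at hb
      have e4 : (catalan k : ℝ) * (q / 4) ^ k ≤ D := by
        rw [hD_def, le_div_iff₀ (by positivity)]
        linarith [hb]
      have e1 : (4 : ℝ) ^ k ≤ 2 * k * (k + 1) * (catalan k : ℝ) := by
        exact_mod_cast four_pow_le_catalan_mul k hk
      have e2 : q ^ k = 4 ^ k * (q / 4) ^ k := by
        rw [← mul_pow, show (4:ℝ) * (q / 4) = q by ring]
      have hq4 : (0:ℝ) ≤ (q / 4) ^ k := by positivity
      have e3 : q ^ k ≤ 2 * k * (k + 1) * ((catalan k : ℝ) * (q / 4) ^ k) := by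
        rw [e2]
        calc (4:ℝ) ^ k * (q / 4) ^ k ≤ (2 * k * (k + 1) * (catalan k : ℝ)) * (q / 4) ^ k :=
              mul_le_mul_of_nonneg_right e1 hq4
          _ = 2 * k * (k + 1) * ((catalan k : ℝ) * (q / 4) ^ k) := by ring
      have hcat0 : (0:ℝ) ≤ (catalan k : ℝ) * (q / 4) ^ k := by positivity
      have hk1 : (1:ℝ) ≤ (k : ℝ) := by exact_mod_cast hk
      calc q ^ k ≤ 2 * k * (k + 1) * ((catalan k : ℝ) * (q / 4) ^ k) := e3
        _ ≤ 2 * k * (k + 1) * D := by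
            apply mul_le_mul_of_nonneg_left e4 (by positivity)
        _ ≤ 4 * D * (k : ℝ) ^ 2 := by
            nlinarith [mul_nonneg (mul_nonneg hD.le (le_trans zero_le_one hk1))
              (by linarith : (0:ℝ) ≤ (k:ℝ) - 1)]
    set M : ℝ := 4 * D with hM_def
    have hM : 0 < M := by positivity
    have hev := (isLittleO_pow_const_const_pow_of_one_lt (R := ℝ) 2 hq).def
      (show (0:ℝ) < 1 / (2 * M) by positivity)
    obtain ⟨k, hk1, hk2⟩ := (hev.and (eventually_ge_atTop 1)).exists
    simp only [Real.norm_eq_abs, abs_pow, Nat.abs_cast, abs_of_nonneg hqpos.le] at hk1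
    have hkey := key k hk2
    have hqk : 0 < q ^ k := pow_pos hqpos k
    have : q ^ k ≤ M * (1 / (2 * M) * q ^ k) :=
      le_trans hkey (mul_le_mul_of_nonneg_left hk1 hM.le)
    have h2 : M * (1 / (2 * M) * q ^ k) = q ^ k / 2 := by
      field_simp
    rw [h2] at this
    linarith
  · -- ofReal R ≤ radius
    have hRe : ENNReal.ofReal R = ((R.toNNReal : NNReal) : ENNReal) := rfl
    rw [hRe]
    apply FormalMultilinearSeries.le_radius_of_bound (C := |A| * R)
    intro n
    rw [hnorm]
    have hRc : ((R.toNNReal : NNReal) : ℝ) = R := Real.coe_toNNReal _ hR.le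
    rw [hRc]
    rcases Nat.even_or_odd n with ⟨k, hk⟩ | ⟨k, hk⟩
    · rw [show n = 2 * k by omega, heven k]
      simp
      positivity
    · rw [show n = 2 * k + 1 by omega, habs k]
      have hcat : (catalan k : ℝ) ≤ 4 ^ k := by exact_mod_cast catalan_le_four_pow k
      have key : (catalan k : ℝ) * |A| ^ (k + 1) * |B| ^ k * R ^ (2 * k + 1)
          = |A| * R * ((catalan k : ℝ) * (|A| * |B| * R ^ 2) ^ k) := by
        rw [pow_succ, pow_add, pow_mul, mul_pow]
        ring
      rw [key, hR2]
      have h1 : (catalan k : ℝ) * (1 / 4) ^ k ≤ 1 := by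
        calc (catalan k : ℝ) * (1 / 4) ^ k ≤ 4 ^ k * (1 / 4) ^ k := by
              apply mul_le_mul_of_nonneg_right hcat (by positivity)
          _ = 1 := by rw [← mul_pow]; norm_num
      calc |A| * R * ((catalan k : ℝ) * (1 / 4) ^ k) ≤ |A| * R * 1 :=
            mul_le_mul_of_nonneg_left h1 (by positivity)
        _ = |A| * R := mul_one _
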